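/- For every integer s ≥ 2 and all u, v ∈ Z_{2^s}, the Gray map satisfies φ(u) + φ(v) = φ(u + v − 2(u ⊙ v)) (sum of binary vectors on the left, arithmetic in Z_{2^s} inside φ on the right). -/

import Mathlib

-- full adder identity
lemma adder (a : ℕ) : ∀ b : ℕ, a + b = (a ^^^ b) + 2 * (a &&& b) := by
  induction a using Nat.strong_induction_on with
  | _ a ih =>
    intro b
    rcases Nat.eq_zero_or_pos a with h | h
    · simp [h]
    · have h2 : a / 2 < a := Nat.div_lt_self h (by norm_num)
      have IH := ih (a / 2) h2 (b / 2)
      have hx : (a ^^^ b) = 2 * (a / 2 ^^^ b / 2) + (a ^^^ b) % 2 := by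
        rw [← Nat.xor_div_two]; omega
      have ha : (a &&& b) = 2 * (a / 2 &&& b / 2) + (a &&& b) % 2 := by
        rw [← Nat.and_div_two]; omega
      have hxm : (a ^^^ b) % 2 = (a + b) % 2 := Nat.xor_mod_two_eq
      have ham : ((a &&& b) % 2 = 1 ↔ (a % 2 = 1 ∧ b % 2 = 1)) := by
        have h0 := Nat.testBit_and a b 0
        simp [Nat.testBit_zero] at h0
        simpa using h0
      omega

lemma sum_testBit (s : ℕ) : ∀ n : ℕ, n < 2 ^ s →
    ∑ i ∈ Finset.range s, 2 ^ i * (n.testBit i).toNat = n := by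
  induction s with
  | zero => intro n h; interval_cases n <;> simp
  | succ s ih =>
    intro n h
    rw [Finset.sum_range_succ']
    have e1 : ∀ i, (n.testBit (i + 1)).toNat = ((n / 2).testBit i).toNat := by
      intro i; rw [Nat.testBit_succ]
    have e0 : (n.testBit 0).toNat = n % 2 := by
      rw [Nat.toNat_testBit]; simp
    have := ih (n / 2) (by omega)
    calc ∑ i ∈ Finset.range s, 2 ^ (i+1) * (n.testBit (i+1)).toNat + 2 ^ 0 * (n.testBit 0).toNat
        = 2 * (∑ i ∈ Finset.range s, 2 ^ i * ((n / 2).testBit i).toNat) + n % 2 := by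
          rw [Finset.mul_sum]
          simp only [e1, e0, pow_zero, one_mul]
          congr 1
          exact Finset.sum_congr rfl (fun i _ => by ring)
      _ = n := by rw [this]; omega

/-- The `i`-th digit of the binary expansion of `u : ZMod (2^s)`. -/
def gdigit (s : ℕ) (u : ZMod (2^s)) (i : ℕ) : ZMod 2 :=
  if (ZMod.val u).testBit i then 1 else 0

/-- Carlet's generalized Gray map `φ : ZMod (2^s) → (Z_2^{s-1} → Z_2)`:
the coordinate indexed by `y ∈ Z_2^{s-1}` is `u_{s-1} + ∑ u_i y_i`. -/
def gray (s : ℕ) (u : ZMod (2^s)) : (Fin (s - 1) → ZMod 2) → ZMod 2 :=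
  fun y => gdigit s u (s - 1) + ∑ i : Fin (s - 1), gdigit s u (i : ℕ) * y i

/-- `u ⊙ v = ∑ 2^i u_i v_i`, the digitwise product. -/
def odot (s : ℕ) (u v : ZMod (2^s)) : ZMod (2^s) :=
  ∑ i ∈ Finset.range s,
    (2 ^ i : ZMod (2^s)) * (if (ZMod.val u).testBit i ∧ (ZMod.val v).testBit i then 1 else 0)

lemma odot_eq (s : ℕ) (u v : ZMod (2^s)) :
    odot s u v = ((u.val &&& v.val : ℕ) : ZMod (2^s)) := by
  have hlt : u.val &&& v.val < 2 ^ s := by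
    haveI : NeZero (2^s) := ⟨by positivity⟩
    exact lt_of_le_of_lt (Nat.and_le_left) (ZMod.val_lt u)
  conv_rhs => rw [← sum_testBit s (u.val &&& v.val) hlt]
  rw [odot]
  push_cast
  refine Finset.sum_congr rfl (fun i _ => ?_)
  rw [Nat.testBit_and]
  cases hu : (ZMod.val u).testBit i <;> cases hv : (ZMod.val v).testBit i <;> simp

lemma key (s : ℕ) (u v : ZMod (2^s)) (i : ℕ) :
    gdigit s (u + v - 2 * odot s u v) i = gdigit s u i + gdigit s v i := by
  haveI : NeZero (2^s) := ⟨by positivity⟩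
  have hw : u + v - 2 * odot s u v = ((u.val ^^^ v.val : ℕ) : ZMod (2^s)) := by
    rw [odot_eq]
    have h := adder u.val v.val
    have : ((u.val + v.val : ℕ) : ZMod (2^s))
        = ((u.val ^^^ v.val : ℕ) : ZMod (2^s)) + 2 * ((u.val &&& v.val : ℕ) : ZMod (2^s)) := by
      rw [h]; push_cast; ring
    push_cast [ZMod.natCast_val, ZMod.cast_id] at this
    linear_combination this
  rw [hw, gdigit, ZMod.val_cast_of_lt (Nat.xor_lt_two_pow (ZMod.val_lt u) (ZMod.val_lt v)),
    Nat.testBit_xor]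
  rw [gdigit, gdigit]
  cases hu : (ZMod.val u).testBit i <;> cases hv : (ZMod.val v).testBit i <;> simp <;> decide

theorem gray_add (s : ℕ) (hs : 2 ≤ s) (u v : ZMod (2^s)) :
    gray s u + gray s v = gray s (u + v - 2 * odot s u v) := by
  funext y
  simp only [gray, Pi.add_apply, key, add_mul, Finset.sum_add_distrib]
  ring
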